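/- Let G be a finite group and p a prime dividing |G|. The number of elements x in G with x^p = 1 is divisible by p. -/

import Mathlib

open Equiv Equiv.Perm VectorsProdEqOne

private lemma headI_replicate_aux {α : Type*} [Inhabited α] (n : ℕ) (hn : n ≠ 0) (a : α) :
    (List.replicate n a).headI = a := by
  cases n with
  | zero => exact absurd rfl hn
  | succ m => simp [List.replicate_succ]

theorem stmt_10 (G : Type*) [Group G] [Fintype G] (p : ℕ) (hp : p.Prime)
    (hdvd : p ∣ Fintype.card G) :
    p ∣ Nat.card {x : G // x ^ p = 1} := by
  haveI : Fact p.Prime := ⟨hp⟩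
  haveI : NeZero p := ⟨hp.ne_zero⟩
  haveI : Inhabited G := ⟨1⟩
  have hrotmod : ∀ (v : vectorsProdEqOne G p) (k : ℕ),
      VectorsProdEqOne.rotate v (k % p) = VectorsProdEqOne.rotate v k := by
    intro v k
    apply Subtype.ext; apply Subtype.ext
    have h := List.rotate_mod v.1.1 k
    rwa [v.1.2] at h
  letI : MulAction (Multiplicative (ZMod p)) (vectorsProdEqOne G p) :=
    { smul := fun k v => VectorsProdEqOne.rotate v (Multiplicative.toAdd k).val
      one_smul := fun v => by
        show VectorsProdEqOne.rotate v (ZMod.val (0 : ZMod p)) = v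
        rw [ZMod.val_zero, VectorsProdEqOne.rotate_zero]
      mul_smul := fun a b v => by
        show VectorsProdEqOne.rotate v (ZMod.val (Multiplicative.toAdd a + Multiplicative.toAdd b))
            = VectorsProdEqOne.rotate
                (VectorsProdEqOne.rotate v (Multiplicative.toAdd b).val)
                (Multiplicative.toAdd a).val
        rw [VectorsProdEqOne.rotate_rotate, ZMod.val_add, hrotmod, Nat.add_comm] }
  have hpG : IsPGroup p (Multiplicative (ZMod p)) :=
    IsPGroup.of_card (n := 1) (by simp [Nat.card_eq_fintype_card, ZMod.card])
  have hmod := hpG.card_modEq_card_fixedPoints (vectorsProdEqOne G p)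
  have e : MulAction.fixedPoints (Multiplicative (ZMod p)) (vectorsProdEqOne G p) ≃
      {x : G // x ^ p = 1} := by
    refine
      { toFun := fun v => ⟨v.1.1.1.headI, ?_⟩
        invFun := fun x => ⟨⟨(⟨List.replicate p x.1, by simp⟩ : List.Vector G p), by
          show (List.replicate p x.1).prod = 1
          rw [List.prod_replicate, x.2]⟩, ?_⟩
        left_inv := ?_, right_inv := ?_ }
    · have h1 : VectorsProdEqOne.rotate v.1 (ZMod.val (1 : ZMod p)) = v.1 :=
        v.2 (Multiplicative.ofAdd (1 : ZMod p))
      rw [ZMod.val_one] at h1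
      obtain ⟨a, ha⟩ := List.rotate_one_eq_self_iff_eq_replicate.mp
        (congrArg (fun w => w.1.1) h1)
      have hlen : (v.1.1.1 : List G).length = p := v.1.1.2
      have hprod : (v.1.1.1 : List G).prod = 1 := v.1.2
      rw [ha, hlen] at hprod ⊢
      rw [List.prod_replicate] at hprod
      rwa [headI_replicate_aux p hp.ne_zero]
    · intro k
      apply Subtype.ext; apply Subtype.ext
      exact List.rotate_replicate _ _ _
    · intro v
      apply Subtype.ext; apply Subtype.ext; apply Subtype.ext
      have h1 : VectorsProdEqOne.rotate v.1 (ZMod.val (1 : ZMod p)) = v.1 :=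
        v.2 (Multiplicative.ofAdd (1 : ZMod p))
      rw [ZMod.val_one] at h1
      obtain ⟨a, ha⟩ := List.rotate_one_eq_self_iff_eq_replicate.mp
        (congrArg (fun w => w.1.1) h1)
      have hlen : (v.1.1.1 : List G).length = p := v.1.1.2
      show List.replicate p (v.1.1.1 : List G).headI = v.1.1.1
      rw [ha, hlen, headI_replicate_aux p hp.ne_zero]
    · intro x
      apply Subtype.ext
      exact headI_replicate_aux p hp.ne_zero _
  have hcard : p ∣ Nat.card (vectorsProdEqOne G p) := by
    rw [Nat.card_eq_fintype_card, VectorsProdEqOne.card]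
    exact hdvd.trans (dvd_pow_self _ (Nat.sub_ne_zero_of_lt hp.one_lt))
  have := (Nat.modEq_zero_iff_dvd.mpr hcard).symm.trans hmod
  rw [Nat.card_congr e] at this
  exact Nat.modEq_zero_iff_dvd.mp this.symm
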